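/- Let Γ be a projective nonsingular irreducible complex curve of genus γ which is Petri with respect to pencils, with γ ≥ 2n−2−γ ≥ 1. Let x+y ∈ Γ_2, let (L,V) ∈ N^1_n(x+y), let B be the fixed divisor of (L,V), and let M: V ⊗ H^0(ω_Γ L^{-1}(x+y)) → H^0(ω_Γ(x+y)) be the multiplication map. Then: (a) ker(M) ≅ H^0(ω_Γ L^{-2}(x+y+B)) ≅ H^1(L^2(−x−y−B))^∨; (b) dim ker(M) ≤ 1; (c) if x occurs in B then M is injective. -/

import Mathlib

/-!
We formalize statements of Bruno–Sernesi, "The symmetric square of a curve and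
the Petri map".

A smooth projective irreducible complex curve `Γ` is presented through its
field of rational functions `K` (a `ℂ`-algebra which is a field), the divisor
map `div : K → Div(Γ)`, a chosen canonical divisor, and the Riemann–Roch spaces
`RR D = H⁰(Γ, O(D)) ⊆ K` of divisors.  Divisors on `Γ` are finitely supported
`ℤ`-valued functions on the set of (closed) points.  Invertible sheaves are
represented by divisors (every line bundle is `O(D)` for some divisor `D`, and
all the notions below are invariant under linear equivalence).
-/

open Module Function
open scoped TensorProduct

noncomputable section

/-- The degree of a divisor. -/
def divDegree {Point : Type} (D : Point →₀ ℤ) : ℤ := D.sum fun _ n => n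

/-- A smooth projective irreducible curve over `ℂ`, presented via its function
field, divisors of rational functions, a canonical divisor and its
Riemann–Roch spaces. -/
structure CurveData (Point K : Type) [Field K] [Algebra ℂ K] : Type where
  /-- the genus of the curve -/
  genus : ℕ
  /-- the divisor of a (nonzero) rational function -/
  div : K → (Point →₀ ℤ)
  /-- a canonical divisor, i.e. the divisor of a rational 1-form; `O(canonical) = ω_Γ` -/
  canonical : Point →₀ ℤ
  /-- the Riemann–Roch space `H⁰(Γ, O(D)) ⊆ K` of a divisor `D` -/
  RR : (Point →₀ ℤ) → Submodule ℂ K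
  mem_RR : ∀ (D : Point →₀ ℤ) (f : K), f ∈ RR D ↔ f = 0 ∨ 0 ≤ D + div f
  div_mul : ∀ f g : K, f ≠ 0 → g ≠ 0 → div (f * g) = div f + div g
  div_algebraMap : ∀ c : ℂ, c ≠ 0 → div ((algebraMap ℂ K) c) = 0
  finiteDimensional_RR : ∀ D, FiniteDimensional ℂ (RR D)
  degree_div : ∀ f : K, f ≠ 0 → divDegree (div f) = 0
  degree_canonical : divDegree canonical = 2 * (genus : ℤ) - 2
  /-- the Riemann–Roch theorem: `h⁰(D) - h⁰(K - D) = deg D + 1 - γ` -/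
  riemannRoch : ∀ D : Point →₀ ℤ,
    (finrank ℂ (RR D) : ℤ) - (finrank ℂ (RR (canonical - D)) : ℤ)
      = divDegree D + 1 - (genus : ℤ)

namespace CurveData

variable {Point K : Type} [Field K] [Algebra ℂ K]

/-- The divisor given by a single point. -/
def pt (x : Point) : Point →₀ ℤ := Finsupp.single x 1

/-- The multiplication map `V ⊗ W → K` induced by the multiplication of the
function field on two subspaces `V, W ⊆ K`.  For `V ⊆ H⁰(L)` and
`W ⊆ H⁰(M)` it takes values in `H⁰(LM) ⊆ K`, so its injectivity is equivalent
to that of the multiplication map `V ⊗ W → H⁰(LM)`. -/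
def mulMap (V W : Submodule ℂ K) : (V ⊗[ℂ] W) →ₗ[ℂ] K :=
  TensorProduct.lift (((LinearMap.mul ℂ K).comp V.subtype).compl₂ W.subtype)

variable (C : CurveData Point K)

/-- `h⁰(D) = dim H⁰(Γ, O(D))`. -/
def h0 (D : Point →₀ ℤ) : ℕ := finrank ℂ (C.RR D)

/-- `h¹(D) = dim H¹(Γ, O(D))`, computed via Serre duality as `h⁰(K - D)`. -/
def h1 (D : Point →₀ ℤ) : ℕ := finrank ℂ (C.RR (C.canonical - D))

/-- `(O(D), V)` is a linear pencil (a `g¹_n` with `n = deg D`): `V` is a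
2-dimensional subspace of `H⁰(O(D))`. -/
def IsPencil (D : Point →₀ ℤ) (V : Submodule ℂ K) : Prop :=
  V ≤ C.RR D ∧ finrank ℂ V = 2

/-- The Petri map `μ₀(L,V) : V ⊗ H⁰(ω_Γ L⁻¹) → H⁰(ω_Γ)` of the pencil
`(L,V) = (O(D), V)`, viewed as a map into `K`; its injectivity is equivalent to
the injectivity of the Petri map. -/
def petriMap (D : Point →₀ ℤ) (V : Submodule ℂ K) :
    (V ⊗[ℂ] (C.RR (C.canonical - D))) →ₗ[ℂ] K :=
  mulMap V (C.RR (C.canonical - D))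

/-- `Γ` is Petri with respect to pencils: the Petri map of every linear pencil
(of any degree) is injective. -/
def PetriWrtPencils : Prop :=
  ∀ (D : Point →₀ ℤ) (V : Submodule ℂ K), C.IsPencil D V →
    Function.Injective (C.petriMap D V)

/-- `x` is a base point of the linear series `(O(D), V)`. -/
def IsBasePoint (D : Point →₀ ℤ) (V : Submodule ℂ K) (x : Point) : Prop :=
  V ≤ C.RR (D - pt x)

/-- `(O(D), V)` is base-point free. -/
def BasePointFree (D : Point →₀ ℤ) (V : Submodule ℂ K) : Prop :=
  ∀ x : Point, ¬ C.IsBasePoint D V x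

/-- `B` is the fixed divisor of the linear series `(O(D), V)`: the largest
effective divisor contained in all divisors of the series. -/
def IsFixedDivisor (D : Point →₀ ℤ) (V : Submodule ℂ K) (B : Point →₀ ℤ) : Prop :=
  0 ≤ B ∧ V ≤ C.RR (D - B) ∧ ∀ B' : Point →₀ ℤ, 0 ≤ B' → V ≤ C.RR (D - B') → B' ≤ B

/-- `(O(D), V)` is complete, i.e. `V = H⁰(O(D))`. -/
def IsComplete (D : Point →₀ ℤ) (V : Submodule ℂ K) : Prop :=
  V = C.RR D

/-- The pencil `(O(D), V)` is neutral with respect to `x + y ∈ Γ₂`, i.e.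
`V(-x-y) ≠ 0`. -/
def IsNeutral (D : Point →₀ ℤ) (V : Submodule ℂ K) (x y : Point) : Prop :=
  V ⊓ C.RR (D - pt x - pt y) ≠ ⊥

/-- The pencil `(O(D), V)` has only simple ramification: every divisor of the
pencil contains each point with multiplicity at most 2, and contains at most
one double point. -/
def SimpleRamification (D : Point →₀ ℤ) (V : Submodule ℂ K) : Prop :=
  ∀ f : K, f ∈ V → f ≠ 0 →
    (∀ z : Point, (D + C.div f) z ≤ 2) ∧ {z : Point | (D + C.div f) z = 2}.Subsingleton

end CurveData

end

section BSAux

open CurveData Module Function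
open scoped TensorProduct

variable {Point K : Type} [Field K] [Algebra ℂ K]

private lemma BS_pt_self (x : Point) : pt x x = 1 := Finsupp.single_eq_same

private lemma BS_pt_ne {x z : Point} (h : x ≠ z) : pt x z = 0 := Finsupp.single_eq_of_ne' h

private lemma BS_pt_nonneg (x : Point) : (0 : Point →₀ ℤ) ≤ pt x := by
  rw [Finsupp.le_def]
  intro z
  by_cases h : x = z
  · subst h; simp [BS_pt_self]
  · simp [BS_pt_ne h]

variable (C : CurveData Point K)

private lemma BS_div_neg (f : K) : C.div (-f) = C.div f := by
  by_cases hf : f = 0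
  · simp [hf]
  · have h1 : ((algebraMap ℂ K) (-1)) ≠ 0 := by
      simpa using (algebraMap ℂ K).injective.ne (a := (-1:ℂ)) (b := 0) (by norm_num)
    have : -f = (algebraMap ℂ K) (-1) * f := by simp
    rw [this, C.div_mul _ _ h1 hf, C.div_algebraMap (-1) (by norm_num), zero_add]

private lemma BS_mem_RR_iff {f : K} (hf : f ≠ 0) (E : Point →₀ ℤ) :
    f ∈ C.RR E ↔ ∀ z, 0 ≤ E z + C.div f z := by
  rw [C.mem_RR]
  simp only [hf, false_or]
  rw [Finsupp.le_def]
  simp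

private lemma BS_RR_mono {E₁ E₂ : Point →₀ ℤ} (h : E₁ ≤ E₂) : C.RR E₁ ≤ C.RR E₂ := by
  intro f hf
  rw [C.mem_RR] at hf ⊢
  rcases hf with h0 | hf
  · exact Or.inl h0
  · exact Or.inr (le_trans hf (add_le_add_left h _))

private lemma BS_deg_add (E F : Point →₀ ℤ) :
    divDegree (E + F) = divDegree E + divDegree F :=
  Finsupp.sum_add_index' (fun _ => rfl) (fun _ _ _ => rfl)

private lemma BS_deg_pt (p : Point) : divDegree (pt (Point := Point) p) = 1 := by
  classical
  simp [divDegree, pt, Finsupp.sum_single_index]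

private lemma BS_mulMap_tmul (V W : Submodule ℂ K) (v : V) (w : W) :
    mulMap V W (v ⊗ₜ w) = (v : K) * (w : K) := by
  simp [mulMap]

private lemma BS_h0_add_pt_le (E : Point →₀ ℤ) (p : Point) :
    finrank ℂ (C.RR (E + pt p)) ≤ finrank ℂ (C.RR E) + 1 := by
  haveI := C.finiteDimensional_RR (C.canonical - E)
  have r1 := C.riemannRoch (E + pt p)
  have r2 := C.riemannRoch E
  rw [BS_deg_add, BS_deg_pt] at r1
  have hmono : finrank ℂ (C.RR (C.canonical - (E + pt p))) ≤
      finrank ℂ (C.RR (C.canonical - E)) := by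
    apply Submodule.finrank_mono
    apply BS_RR_mono
    exact sub_le_sub_left (le_add_of_nonneg_right (BS_pt_nonneg p)) _
  have hmono' : (finrank ℂ (C.RR (C.canonical - (E + pt p))) : ℤ) ≤
      (finrank ℂ (C.RR (C.canonical - E)) : ℤ) := by exact_mod_cast hmono
  omega

private lemma BS_T (F : Point →₀ ℤ) (p : Point) (s : K) (hs0 : s ≠ 0)
    (hsRR : s ∈ C.RR (F + pt p)) (hsp : F p + C.div s p = -1) :
    finrank ℂ (C.RR (C.canonical - F)) = finrank ℂ (C.RR (C.canonical - F - pt p)) := by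
  haveI := C.finiteDimensional_RR (F + pt p)
  haveI := C.finiteDimensional_RR (C.canonical - F)
  have hsub : C.RR F ≤ C.RR (F + pt p) :=
    BS_RR_mono C (le_add_of_nonneg_right (BS_pt_nonneg p))
  have hns : s ∉ C.RR F := by
    intro hmem
    have := (BS_mem_RR_iff C hs0 F).mp hmem p
    omega
  have hlt : finrank ℂ (C.RR F) < finrank ℂ (C.RR (F + pt p)) := by
    rcases lt_or_eq_of_le (Submodule.finrank_mono hsub) with h | h
    · exact h
    · exact absurd (Submodule.eq_of_le_of_finrank_eq hsub h ▸ hsRR) hns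
  have r1 := C.riemannRoch (F + pt p)
  have r2 := C.riemannRoch F
  rw [BS_deg_add, BS_deg_pt] at r1
  have heq : C.canonical - (F + pt p) = C.canonical - F - pt p := by abel
  rw [heq] at r1
  have hmono : finrank ℂ (C.RR (C.canonical - F - pt p)) ≤
      finrank ℂ (C.RR (C.canonical - F)) := by
    apply Submodule.finrank_mono
    apply BS_RR_mono
    exact sub_le_self _ (BS_pt_nonneg p)
  omega

private lemma BS_pencil_trick (f g : K) (hf0 : f ≠ 0) (hg0 : g ≠ 0)
    (V : Submodule ℂ K) [FiniteDimensional ℂ V] (hrank : finrank ℂ V = 2)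
    (hfV : f ∈ V) (hgV : g ∈ V)
    (hli : LinearIndependent ℂ ![f, g])
    (N M₀ : Point →₀ ℤ) (hM₀ : ∀ z, M₀ z = min (C.div f z) (C.div g z)) :
    Nonempty (↥(C.RR (N + M₀)) ≃ₗ[ℂ] ↥(LinearMap.ker (mulMap V (C.RR N)))) := by
  classical
  haveI := C.finiteDimensional_RR N
  set W := C.RR N with hW
  have hMf : ∀ z, M₀ z ≤ C.div f z := fun z => (hM₀ z) ▸ min_le_left _ _
  have hMg : ∀ z, M₀ z ≤ C.div g z := fun z => (hM₀ z) ▸ min_le_right _ _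
  have hmul : ∀ u : K, u ≠ 0 → (∀ z, M₀ z ≤ C.div u z) →
      ∀ h ∈ C.RR (N + M₀), h * u ∈ W := by
    intro u hu0 hMu h hh
    by_cases h0 : h = 0
    · rw [h0, zero_mul]; exact W.zero_mem
    · rw [hW, BS_mem_RR_iff C (mul_ne_zero h0 hu0)]
      intro z
      rw [C.div_mul _ _ h0 hu0]
      have h1 := (BS_mem_RR_iff C h0 (N + M₀)).mp hh z
      have h2 := hMu z
      simp only [Finsupp.add_apply] at h1 ⊢
      omega
  let mulg : ↥(C.RR (N + M₀)) →ₗ[ℂ] ↥W :=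
    LinearMap.codRestrict W ((LinearMap.mulRight ℂ g).comp (C.RR (N + M₀)).subtype)
      (fun h => hmul g hg0 hMg _ h.2)
  let mulf : ↥(C.RR (N + M₀)) →ₗ[ℂ] ↥W :=
    LinearMap.codRestrict W ((LinearMap.mulRight ℂ f).comp (C.RR (N + M₀)).subtype)
      (fun h => hmul f hf0 hMf _ h.2)
  have hmulg_coe : ∀ h, ((mulg h : K)) = (h : K) * g := fun h => rfl
  have hmulf_coe : ∀ h, ((mulf h : K)) = (h : K) * f := fun h => rfl
  set f' : V := ⟨f, hfV⟩ with hf'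
  set g' : V := ⟨g, hgV⟩ with hg'
  let Φ : ↥(C.RR (N + M₀)) →ₗ[ℂ] V ⊗[ℂ] ↥W :=
    (TensorProduct.mk ℂ V W f').comp mulg + (TensorProduct.mk ℂ V W g').comp (-mulf)
  have hΦapp : ∀ h, Φ h = f' ⊗ₜ (mulg h) - g' ⊗ₜ (mulf h) := fun h => by
    simp [Φ, TensorProduct.tmul_neg, sub_eq_add_neg]
  have hΦker : ∀ h, Φ h ∈ LinearMap.ker (mulMap V W) := by
    intro h
    rw [LinearMap.mem_ker, hΦapp, map_sub, BS_mulMap_tmul, BS_mulMap_tmul,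
      hmulg_coe, hmulf_coe]
    show f * ((h:K) * g) - g * ((h:K) * f) = 0
    ring
  let Φ' : ↥(C.RR (N + M₀)) →ₗ[ℂ] ↥(LinearMap.ker (mulMap V W)) :=
    Φ.codRestrict _ hΦker
  -- basis of V
  have hliV : LinearIndependent ℂ ![f', g'] := by
    apply LinearIndependent.of_comp V.subtype
    have : (V.subtype ∘ ![f', g']) = ![f, g] := by
      funext i; fin_cases i <;> rfl
    rw [this]; exact hli
  let b : Basis (Fin 2) ℂ V :=
    basisOfLinearIndependentOfCardEqFinrank hliV (by simp [hrank])
  have hb : ⇑b = ![f', g'] := coe_basisOfLinearIndependentOfCardEqFinrank _ _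
  have hb0 : b 0 = f' := by rw [hb]; rfl
  have hb1 : b 1 = g' := by rw [hb]; rfl
  let χ : Fin 2 → (V ⊗[ℂ] ↥W →ₗ[ℂ] ↥W) := fun i =>
    (TensorProduct.lid ℂ ↥W).toLinearMap.comp (LinearMap.rTensor ↥W (b.coord i))
  have hχ : ∀ i (v : V) (w : ↥W), χ i (v ⊗ₜ w) = b.repr v i • w := by
    intro i v w
    simp [χ, Basis.coord_apply]
  have hdecomp : ∀ κ : V ⊗[ℂ] ↥W, κ = f' ⊗ₜ (χ 0 κ) + g' ⊗ₜ (χ 1 κ) := by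
    intro κ
    have hkey : (TensorProduct.mk ℂ V ↥W f').comp (χ 0)
        + (TensorProduct.mk ℂ V ↥W g').comp (χ 1) = LinearMap.id := by
      apply TensorProduct.ext'
      intro v w
      have hv : (b.repr v) 0 • f' + (b.repr v) 1 • g' = v := by
        have := b.sum_repr v
        rw [Fin.sum_univ_two, hb0, hb1] at this
        exact this
      simp only [LinearMap.add_apply, LinearMap.comp_apply, TensorProduct.mk_apply,
        LinearMap.id_apply, hχ]
      conv_rhs => rw [← hv]
      rw [TensorProduct.add_tmul, TensorProduct.smul_tmul, TensorProduct.smul_tmul]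
    conv_lhs => rw [← LinearMap.id_apply (R := ℂ) κ, ← hkey]
    rfl
  have hcoord00 : b.repr f' 0 = 1 := by rw [← hb0, b.repr_self]; exact Finsupp.single_eq_same
  have hcoord01 : b.repr g' 0 = 0 := by rw [← hb1, b.repr_self]; exact Finsupp.single_eq_of_ne (by decide)
  have hcoord10 : b.repr f' 1 = 0 := by rw [← hb0, b.repr_self]; exact Finsupp.single_eq_of_ne (by decide)
  have hcoord11 : b.repr g' 1 = 1 := by rw [← hb1, b.repr_self]; exact Finsupp.single_eq_same
  have hinj : Function.Injective Φ' := by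
    rw [injective_iff_map_eq_zero]
    intro h hh
    have hΦ0 : Φ h = 0 := congrArg Subtype.val hh
    have h1 : χ 0 (Φ h) = 0 := by rw [hΦ0, map_zero]
    have h2 : χ 0 (Φ h) = mulg h := by
      rw [hΦapp, map_sub, hχ, hχ, hcoord00, hcoord01, one_smul, zero_smul, sub_zero]
    have h3 : (h : K) * g = 0 := by
      have := h2 ▸ h1
      have := congrArg Subtype.val this
      rwa [hmulg_coe] at this
    rcases mul_eq_zero.mp h3 with h4 | h4
    · exact Subtype.ext h4
    · exact absurd h4 hg0
  have hsurj : Function.Surjective Φ' := by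
    rintro ⟨κ, hκ⟩
    rw [LinearMap.mem_ker] at hκ
    set a : ↥W := χ 0 κ with ha
    set c : ↥W := χ 1 κ with hc
    have hκd : κ = f' ⊗ₜ a + g' ⊗ₜ c := hdecomp κ
    have hab : f * (a : K) + g * (c : K) = 0 := by
      have h5 := congrArg (mulMap V W) hκd
      rw [hκ, map_add, BS_mulMap_tmul, BS_mulMap_tmul] at h5
      exact h5.symm
    by_cases hA : (a : K) = 0
    · have hC : (c : K) = 0 := by
        rw [hA, mul_zero, zero_add] at hab
        rcases mul_eq_zero.mp hab with h4 | h4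
        · exact absurd h4 hg0
        · exact h4
      refine ⟨0, Subtype.ext ?_⟩
      show Φ 0 = κ
      rw [map_zero, hκd]
      have : a = 0 := Subtype.ext hA
      rw [this]
      have : c = 0 := Subtype.ext hC
      rw [this, TensorProduct.tmul_zero, TensorProduct.tmul_zero, add_zero]
    · have hC : (c : K) ≠ 0 := by
        intro h0
        rw [h0, mul_zero, add_zero] at hab
        rcases mul_eq_zero.mp hab with h4 | h4
        · exact absurd h4 hf0
        · exact absurd h4 hA
      set h : K := (a : K) * g⁻¹ with hhdef
      have hh0 : h ≠ 0 := mul_ne_zero hA (inv_ne_zero hg0)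
      have hhg : h * g = (a : K) := by
        rw [hhdef]; field_simp
      have hhf : h * f = -(c : K) := by
        rw [hhdef]; field_simp; linear_combination hab
      have hdiva : C.div (a : K) = C.div h + C.div g := by
        rw [← hhg]; exact C.div_mul h g hh0 hg0
      have hdivc : C.div (c : K) = C.div h + C.div f := by
        have : (c : K) = -(h * f) := by rw [hhf, neg_neg]
        rw [this, BS_div_neg, C.div_mul h f hh0 hf0]
      have hmem : h ∈ C.RR (N + M₀) := by
        rw [BS_mem_RR_iff C hh0]
        intro z
        have haz := (BS_mem_RR_iff C hA N).mp a.2 z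
        have hcz := (BS_mem_RR_iff C hC N).mp c.2 z
        rw [hdiva, Finsupp.add_apply] at haz
        rw [hdivc, Finsupp.add_apply] at hcz
        have hmz := hM₀ z
        simp only [Finsupp.add_apply]
        rcases min_cases (C.div f z) (C.div g z) with ⟨he, _⟩ | ⟨he, _⟩ <;> omega
      refine ⟨⟨h, hmem⟩, Subtype.ext ?_⟩
      show Φ ⟨h, hmem⟩ = κ
      rw [hΦapp, hκd]
      have e1 : mulg ⟨h, hmem⟩ = a := Subtype.ext (by rw [hmulg_coe]; exact hhg)
      have e2 : mulf ⟨h, hmem⟩ = -c := Subtype.ext (by rw [hmulf_coe]; exact hhf)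
      rw [e1, e2, TensorProduct.tmul_neg]; exact sub_neg_eq_add (f' ⊗ₜ[ℂ] a) (g' ⊗ₜ[ℂ] c)
  exact ⟨LinearEquiv.ofBijective Φ' ⟨hinj, hsurj⟩⟩

private lemma BS_two_smul_apply (Dv : Point →₀ ℤ) (z : Point) : (2 • Dv) z = 2 * Dv z := by
  rw [Finsupp.smul_apply, nsmul_eq_mul]
  norm_num

end BSAux
set_option maxHeartbeats 1000000 in
open CurveData in
/-- Lemma 5.3.  Let `Γ` be a projective nonsingular
irreducible complex curve of genus `γ`, Petri with respect to pencils, with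
`γ ≥ 2n - 2 - γ ≥ 1`.  Let `x + y ∈ Γ₂`, let `(L,V) = (O(D),V) ∈ N¹_n(x+y)`
(i.e. a `g¹_n` on `Γ` which is neutral with respect to `x+y`), let `B` be its
fixed divisor, and let
`M : V ⊗ H⁰(ω_Γ L⁻¹(x+y)) → H⁰(ω_Γ(x+y))` be the multiplication map (realized
as a map into `K`).  Then:
(a) `ker M ≅ H⁰(ω_Γ L⁻²(x+y+B)) ≅ H¹(L²(-x-y-B))ᵛ` (we model `H¹(E)` by its
Serre dual `H⁰(ω_Γ(-E)) = RR (canonical - E)`, so `H¹(L²(-x-y-B))ᵛ` is the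
dual of `RR (canonical - (2D - x - y - B))`);
(b) `dim ker M ≤ 1`;
(c) if `x` occurs in `B` then `M` is injective. -/
theorem ker_of_neutral_multiplication_map
    (Point K : Type) [Field K] [Algebra ℂ K] (C : CurveData Point K)
    (hPetri : C.PetriWrtPencils)
    (n : ℤ) (hρ1 : 1 ≤ 2 * n - 2 - (C.genus : ℤ))
    (hρ2 : 2 * n - 2 - (C.genus : ℤ) ≤ (C.genus : ℤ))
    (x y : Point) (D : Point →₀ ℤ) (hdeg : divDegree D = n)
    (V : Submodule ℂ K) (hP : C.IsPencil D V) (hneu : C.IsNeutral D V x y)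
    (B : Point →₀ ℤ) (hB : C.IsFixedDivisor D V B) :
    (Nonempty (↥(LinearMap.ker
        (mulMap V (C.RR (C.canonical - D + pt x + pt y)))) ≃ₗ[ℂ]
      ↥(C.RR (C.canonical - 2 • D + pt x + pt y + B))) ∧
     Nonempty (↥(LinearMap.ker
        (mulMap V (C.RR (C.canonical - D + pt x + pt y)))) ≃ₗ[ℂ]
      Module.Dual ℂ ↥(C.RR (C.canonical - (2 • D - pt x - pt y - B))))) ∧
    finrank ℂ ↥(LinearMap.ker
        (mulMap V (C.RR (C.canonical - D + pt x + pt y)))) ≤ 1 ∧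
    (1 ≤ B x → Function.Injective
        (mulMap V (C.RR (C.canonical - D + pt x + pt y)))) := by
  classical
  obtain ⟨f, hfm, hf0⟩ := (Submodule.ne_bot_iff _).mp hneu
  obtain ⟨hfV, hfRR⟩ := Submodule.mem_inf.mp hfm
  haveI := C.finiteDimensional_RR D
  haveI : FiniteDimensional ℂ V := Submodule.finiteDimensional_of_le hP.1
  have hlt : Submodule.span ℂ {f} < V := by
    refine lt_of_le_of_ne ((Submodule.span_singleton_le_iff_mem f V).mpr hfV) ?_
    intro he
    have h1 : finrank ℂ (Submodule.span ℂ ({f} : Set K)) = 1 := finrank_span_singleton hf0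
    rw [he, hP.2] at h1
    exact absurd h1 (by norm_num)
  obtain ⟨g, hgV, hgns⟩ := SetLike.exists_of_lt hlt
  have hg0 : g ≠ 0 := fun h => hgns (h ▸ Submodule.zero_mem _)
  have hli : LinearIndependent ℂ ![f, g] :=
    (LinearIndependent.pair_iff' hf0).mpr
      (fun a ha => hgns (ha ▸ Submodule.smul_mem _ a (Submodule.mem_span_singleton_self f)))
  have hVspan : V = Submodule.span ℂ {f, g} := by
    have hle : Submodule.span ℂ ({f, g} : Set K) ≤ V := by
      rw [Submodule.span_le]
      intro v hv
      simp only [Set.mem_insert_iff, Set.mem_singleton_iff] at hv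
      rcases hv with rfl | rfl
      · exact hfV
      · exact hgV
    symm
    apply Submodule.eq_of_le_of_finrank_eq hle
    rw [hP.2]
    have hrange : Set.range ![f, g] = {f, g} := by
      ext v
      constructor
      · rintro ⟨i, rfl⟩
        fin_cases i <;> simp
      · rintro hv
        simp only [Set.mem_insert_iff, Set.mem_singleton_iff] at hv
        rcases hv with rfl | rfl
        · exact ⟨0, rfl⟩
        · exact ⟨1, rfl⟩
    rw [← hrange, finrank_span_eq_card hli]
    simp
  have hBle : ∀ z, B z ≤ D z + C.div f z ∧ B z ≤ D z + C.div g z := by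
    intro z
    have h1 := (BS_mem_RR_iff C hf0 (D - B)).mp (hB.2.1 hfV) z
    have h2 := (BS_mem_RR_iff C hg0 (D - B)).mp (hB.2.1 hgV) z
    rw [Finsupp.sub_apply] at h1 h2
    omega
  have hfxy : ∀ z, pt x z + pt y z ≤ D z + C.div f z := by
    intro z
    have h1 := (BS_mem_RR_iff C hf0 (D - pt x - pt y)).mp hfRR z
    rw [Finsupp.sub_apply, Finsupp.sub_apply] at h1
    omega
  have hB0 : ∀ z, 0 ≤ B z := by
    intro z
    have := Finsupp.le_def.mp hB.1 z
    simpa using this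
  have hmin : ∀ z, (B - D) z = min (C.div f z) (C.div g z) := by
    set B' : Point →₀ ℤ := D + Finsupp.zipWith min (min_self 0) (C.div f) (C.div g) with hB'def
    have hB'app : ∀ z, B' z = D z + min (C.div f z) (C.div g z) := by
      intro z
      rw [hB'def, Finsupp.add_apply, Finsupp.zipWith_apply]
    have h1 : B ≤ B' := by
      rw [Finsupp.le_def]
      intro z
      rw [hB'app]
      have := hBle z
      rcases min_cases (C.div f z) (C.div g z) with ⟨he, _⟩ | ⟨he, _⟩ <;> omega
    have h2 : B' ≤ B := by
      apply hB.2.2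
      · exact le_trans hB.1 h1
      · have hf' : f ∈ C.RR (D - B') := by
          rw [BS_mem_RR_iff C hf0]
          intro z
          rw [Finsupp.sub_apply, hB'app]
          rcases min_cases (C.div f z) (C.div g z) with ⟨he, _⟩ | ⟨he, _⟩ <;> omega
        have hg' : g ∈ C.RR (D - B') := by
          rw [BS_mem_RR_iff C hg0]
          intro z
          rw [Finsupp.sub_apply, hB'app]
          rcases min_cases (C.div f z) (C.div g z) with ⟨he, _⟩ | ⟨he, _⟩ <;> omega
        rw [hVspan, Submodule.span_le]
        intro v hv
        simp only [Set.mem_insert_iff, Set.mem_singleton_iff] at hv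
        rcases hv with rfl | rfl
        · exact hf'
        · exact hg'
    have hBB' : B = B' := le_antisymm h1 h2
    intro z
    rw [Finsupp.sub_apply, hBB', hB'app]
    ring
  have hgBz : ∀ z, B z < pt x z + pt y z → D z + C.div g z = B z := by
    intro z hz
    have h1 := hmin z
    rw [Finsupp.sub_apply] at h1
    have h2 := hfxy z
    have h3 := (hBle z).2
    rcases min_cases (C.div f z) (C.div g z) with ⟨he, hle⟩ | ⟨he, hle⟩ <;> omega
  have hptle : ∀ p : Point, 1 ≤ B p → (pt p : Point →₀ ℤ) ≤ B := by
    intro p hp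
    rw [Finsupp.le_def]
    intro z
    by_cases h : p = z
    · subst h; rw [BS_pt_self]; omega
    · rw [BS_pt_ne h]; exact hB0 z
  have hstar : ∀ E : Point →₀ ℤ, 0 ≤ E → E ≤ B →
      finrank ℂ ↥(C.RR (C.canonical - 2 • D + B + E)) = 0 := by
    intro E hE0 hEB
    have hpencil : C.IsPencil (D - E) V :=
      ⟨le_trans hB.2.1 (BS_RR_mono C (sub_le_sub_left hEB D)), hP.2⟩
    have hinj : Function.Injective (mulMap V (C.RR (C.canonical - (D - E)))) :=
      hPetri (D - E) V hpencil
    obtain ⟨e⟩ := BS_pencil_trick C f g hf0 hg0 V hP.2 hfV hgV hli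
      (C.canonical - (D - E)) (B - D) hmin
    have hker : LinearMap.ker (mulMap V (C.RR (C.canonical - (D - E)))) = ⊥ :=
      LinearMap.ker_eq_bot_of_injective hinj
    haveI := C.finiteDimensional_RR (C.canonical - (D - E))
    have h0 : finrank ℂ ↥(C.RR (C.canonical - (D - E) + (B - D))) = 0 := by
      exact (LinearEquiv.finrank_eq e).trans (by rw [hker]; exact finrank_bot ℂ _)
    have hdiv_eq : C.canonical - (D - E) + (B - D) = C.canonical - 2 • D + B + E := by
      rw [two_smul]; abel
    rwa [hdiv_eq] at h0
  obtain ⟨e₁⟩ := BS_pencil_trick C f g hf0 hg0 V hP.2 hfV hgV hli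
    (C.canonical - D + pt x + pt y) (B - D) hmin
  have hdiv1 : C.canonical - D + pt x + pt y + (B - D)
      = C.canonical - 2 • D + pt x + pt y + B := by
    rw [two_smul]; abel
  rw [hdiv1] at e₁
  haveI := C.finiteDimensional_RR (C.canonical - 2 • D + pt x + pt y + B)
  haveI := C.finiteDimensional_RR (C.canonical - D + pt x + pt y)
  refine ⟨⟨⟨e₁.symm⟩, ?_⟩, ?_, ?_⟩
  · have hdiv2 : C.canonical - (2 • D - pt x - pt y - B)
        = C.canonical - 2 • D + pt x + pt y + B := by
      rw [two_smul]; abel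
    rw [hdiv2]
    exact ⟨e₁.symm.trans (Module.finBasis ℂ _).toDualEquiv⟩
  · rw [← e₁.finrank_eq]
    have hx0 : finrank ℂ ↥(C.RR (C.canonical - 2 • D + B + pt x)) = 0 := by
      by_cases hBx : 1 ≤ B x
      · exact hstar (pt x) (BS_pt_nonneg x) (hptle x hBx)
      · have hBx0 : B x = 0 := by have := hB0 x; omega
        have hGx : D x + C.div g x = B x := by
          apply hgBz x
          have hpyx : 0 ≤ pt y x := by
            by_cases h : y = x
            · subst h; rw [BS_pt_self]; omega
            · rw [BS_pt_ne h]
          rw [BS_pt_self]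
          omega
        have hF : (2 • D - B : Point →₀ ℤ) = (2 • D - B - pt x) + pt x := by abel
        have hsRR : g * g ∈ C.RR ((2 • D - B - pt x) + pt x) := by
          rw [← hF, BS_mem_RR_iff C (mul_ne_zero hg0 hg0)]
          intro z
          rw [C.div_mul g g hg0 hg0]
          simp only [Finsupp.sub_apply, Finsupp.add_apply, BS_two_smul_apply]
          have h1 := (hBle z).2
          have h2 := hB0 z
          omega
        have hval : (2 • D - B - pt x) x + C.div (g * g) x = -1 := by
          rw [C.div_mul g g hg0 hg0]
          simp only [Finsupp.sub_apply, Finsupp.add_apply, BS_two_smul_apply, BS_pt_self]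
          omega
        have hT := BS_T C (2 • D - B - pt x) x (g * g) (mul_ne_zero hg0 hg0) hsRR hval
        have hd1 : C.canonical - (2 • D - B - pt x) = C.canonical - 2 • D + B + pt x := by
          abel
        have hd2 : C.canonical - (2 • D - B - pt x) - pt x = C.canonical - 2 • D + B := by
          abel
        rw [hd2, hd1] at hT
        rw [hT]
        have h00 := hstar 0 (le_refl 0) hB.1
        rwa [add_zero] at h00
    calc finrank ℂ ↥(C.RR (C.canonical - 2 • D + pt x + pt y + B))
        = finrank ℂ ↥(C.RR ((C.canonical - 2 • D + B + pt x) + pt y)) := by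
          rw [show C.canonical - 2 • D + pt x + pt y + B
            = (C.canonical - 2 • D + B + pt x) + pt y by abel]
      _ ≤ finrank ℂ ↥(C.RR (C.canonical - 2 • D + B + pt x)) + 1 := BS_h0_add_pt_le C _ y
      _ ≤ 1 := by omega
  · intro hBx1
    have key : finrank ℂ ↥(C.RR (C.canonical - 2 • D + pt x + pt y + B)) = 0 := by
      have Targ : B y = pt x y → B y < pt x y + pt y y →
          finrank ℂ ↥(C.RR (C.canonical - 2 • D + pt x + pt y + B)) = 0 := by
        intro hy2 hy1
        have hGyy : D y + C.div g y = B y := hgBz y hy1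
        have hsRR : g * g ∈ C.RR ((2 • D - B - pt x - pt y) + pt y) := by
          have hF : (2 • D - B - pt x - pt y) + pt y = 2 • D - B - pt x := by abel
          rw [hF, BS_mem_RR_iff C (mul_ne_zero hg0 hg0)]
          intro z
          rw [C.div_mul g g hg0 hg0]
          simp only [Finsupp.sub_apply, Finsupp.add_apply, BS_two_smul_apply]
          have h1 := (hBle z).2
          have h2 := hB0 z
          by_cases hz : x = z
          · subst hz; rw [BS_pt_self]; omega
          · rw [BS_pt_ne hz]; omega
        have hval : (2 • D - B - pt x - pt y) y + C.div (g * g) y = -1 := by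
          rw [C.div_mul g g hg0 hg0]
          simp only [Finsupp.sub_apply, Finsupp.add_apply, BS_two_smul_apply, BS_pt_self]
          omega
        have hT := BS_T C (2 • D - B - pt x - pt y) y (g * g) (mul_ne_zero hg0 hg0) hsRR hval
        have hd1 : C.canonical - (2 • D - B - pt x - pt y)
            = C.canonical - 2 • D + pt x + pt y + B := by abel
        have hd2 : C.canonical - (2 • D - B - pt x - pt y) - pt y
            = C.canonical - 2 • D + B + pt x := by abel
        rw [hd2, hd1] at hT
        rw [hT]
        exact hstar (pt x) (BS_pt_nonneg x) (hptle x hBx1)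
      by_cases hxy2 : (pt x + pt y : Point →₀ ℤ) ≤ B
      · have h0 := hstar (pt x + pt y) (add_nonneg (BS_pt_nonneg x) (BS_pt_nonneg y)) hxy2
        rwa [show C.canonical - 2 • D + B + (pt x + pt y)
          = C.canonical - 2 • D + pt x + pt y + B by abel] at h0
      · by_cases hxeq : x = y
        · subst hxeq
          have hBxlt : B x < 2 := by
            by_contra hc
            push_neg at hc
            apply hxy2
            rw [Finsupp.le_def]
            intro z
            simp only [Finsupp.add_apply]
            by_cases hz : x = z
            · subst hz; rw [BS_pt_self]; omega
            · rw [BS_pt_ne hz]; have := hB0 z; omega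
          apply Targ
          · rw [BS_pt_self]; omega
          · rw [BS_pt_self]; omega
        · have hBy : B y = 0 := by
            by_contra hc
            have hBy1 : 1 ≤ B y := by have := hB0 y; omega
            apply hxy2
            rw [Finsupp.le_def]
            intro z
            simp only [Finsupp.add_apply]
            by_cases hz1 : x = z
            · subst hz1
              rw [BS_pt_self, BS_pt_ne (Ne.symm hxeq)]
              omega
            · rw [BS_pt_ne hz1]
              by_cases hz2 : y = z
              · subst hz2; rw [BS_pt_self]; omega
              · rw [BS_pt_ne hz2]; have := hB0 z; omega
          apply Targ
          · rw [BS_pt_ne hxeq, hBy]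
          · rw [BS_pt_ne hxeq, BS_pt_self, hBy]; omega
    have hker0 : finrank ℂ
        ↥(LinearMap.ker (mulMap V (C.RR (C.canonical - D + pt x + pt y)))) = 0 := by
      rw [← e₁.finrank_eq]; exact key
    refine (injective_iff_map_eq_zero _).mpr (LinearMap.ker_eq_bot'.mp ?_)
    refine (Submodule.eq_bot_iff _).mpr fun m hm => ?_
    have hb : C.RR (C.canonical - 2 • D + pt x + pt y + B) = ⊥ := Submodule.finrank_eq_zero.mp key
    have h1 : e₁.symm ⟨m, hm⟩ = 0 :=
      Subtype.ext ((Submodule.mem_bot ℂ).mp (hb ▸ (e₁.symm ⟨m, hm⟩).2))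
    have h2 := congrArg Subtype.val (e₁.apply_symm_apply ⟨m, hm⟩)
    rw [h1, map_zero] at h2
    exact h2.symm
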